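/- Let F be a differential field with constant subfield K. Elements y₁,…,y_r of F are linearly dependent over K if and only if the columns of the Wronski matrix Y, whose (i,j) entry is y_j^{(i-1)} for 1 ≤ i,j ≤ r, are linearly dependent over F. -/

import Mathlib

def IsDeriv {F : Type*} [Field F] (d : F → F) : Prop :=
  (∀ a b, d (a + b) = d a + d b) ∧ (∀ a b, d (a * b) = d a * b + a * d b)

section Aux

variable {F : Type*} [Field F] {d : F → F}

lemma isDeriv_zero (hd : IsDeriv d) : d 0 = 0 := by
  have h := hd.1 0 0
  simp only [add_zero] at h
  exact left_eq_add.mp h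

lemma isDeriv_one (hd : IsDeriv d) : d 1 = 0 := by
  have h := hd.2 1 1
  simp only [mul_one, one_mul] at h
  exact left_eq_add.mp h

lemma isDeriv_iterate_zero (hd : IsDeriv d) : ∀ n, d^[n] (0 : F) = 0
  | 0 => rfl
  | (n+1) => by rw [Function.iterate_succ_apply', isDeriv_iterate_zero hd n, isDeriv_zero hd]

lemma isDeriv_sum (hd : IsDeriv d) {ι : Type*} {s : Finset ι} (f : ι → F) :
    d (∑ k ∈ s, f k) = ∑ k ∈ s, d (f k) :=
  map_sum (AddMonoidHom.mk' d hd.1) f s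

lemma extend_lemma (hd : IsDeriv d) {m : ℕ} (y : Fin (m+1) → F) (j : Fin (m+1))
    (c₀ : Fin m → F) (h0 : c₀ ≠ 0) (hc : ∀ k, d (c₀ k) = 0)
    (hs : ∑ k, c₀ k * y (j.succAbove k) = 0) :
    ∃ c' : Fin (m+1) → F, c' ≠ 0 ∧ (∀ i, d (c' i) = 0) ∧ ∑ i, c' i * y i = 0 := by
  have hinj : Function.Injective j.succAbove := Fin.succAbove_right_injective
  set c' : Fin (m+1) → F := Function.extend j.succAbove c₀ (0 : Fin (m+1) → F) with hc'
  have happ : ∀ k, c' (j.succAbove k) = c₀ k := fun k => hinj.extend_apply c₀ (0 : Fin (m+1) → F) k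
  have hj : c' j = 0 := by
    have : ¬∃ k, j.succAbove k = j := fun ⟨k, hk⟩ => Fin.succAbove_ne j k hk
    exact Function.extend_apply' c₀ (0 : Fin (m+1) → F) j this
  refine ⟨c', ?_, ?_, ?_⟩
  · obtain ⟨k, hk⟩ := Function.ne_iff.1 h0
    intro h
    exact hk (by rw [← happ k, h]; rfl)
  · intro x
    rcases eq_or_ne x j with rfl | hx
    · rw [hj]; exact isDeriv_zero hd
    · obtain ⟨k, hk⟩ := Fin.exists_succAbove_eq hx
      rw [← hk, happ]; exact hc k
  · rw [Fin.sum_univ_succAbove _ j, hj, zero_mul, zero_add]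
    simpa [happ] using hs

lemma wronskian_bwd (hd : IsDeriv d) :
    ∀ (r : ℕ) (y c : Fin r → F), c ≠ 0 →
      (∀ i : Fin r, ∑ j, d^[(i : ℕ)] (y j) * c j = 0) →
      ∃ c' : Fin r → F, c' ≠ 0 ∧ (∀ i, d (c' i) = 0) ∧ ∑ i, c' i * y i = 0 := by
  intro r
  induction r with
  | zero => intro y c hc _; exact absurd (funext fun i => i.elim0) hc
  | succ m IH =>
    intro y c hc hrows
    by_cases hz : ∃ j, c j = 0
    · -- some coefficient vanishes: drop that column and use induction
      obtain ⟨j, hj⟩ := hz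
      have hrows' : ∀ i : Fin m, ∑ k, d^[(i : ℕ)] (y (j.succAbove k)) * c (j.succAbove k) = 0 := by
        intro i
        have h := hrows ⟨(i : ℕ), lt_trans i.isLt (Nat.lt_succ_self m)⟩
        rw [Fin.sum_univ_succAbove (fun x => d^[(i : ℕ)] (y x) * c x) j] at h
        simpa [hj] using h
      have hc' : (fun k => c (j.succAbove k)) ≠ 0 := by
        obtain ⟨k, hk⟩ := Function.ne_iff.1 hc
        have hkj : k ≠ j := fun h => hk (h ▸ hj)
        obtain ⟨k', hk'⟩ := Fin.exists_succAbove_eq hkj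
        intro h
        exact hk (by rw [← hk']; exact congrFun h k')
      obtain ⟨c₀, h0, hcst, hsum⟩ := IH (fun k => y (j.succAbove k)) _ hc' hrows'
      exact extend_lemma hd y j c₀ h0 hcst hsum
    · -- all coefficients nonzero: normalize so the 0-th coefficient is 1
      push_neg at hz
      set b : Fin (m+1) → F := fun k => c k / c 0 with hb
      have hb0 : b 0 = 1 := div_self (hz 0)
      have hbrows : ∀ i : ℕ, i < m + 1 → ∑ k, d^[i] (y k) * b k = 0 := by
        intro i hi
        have h := hrows ⟨i, hi⟩
        simp only [hb, ← mul_div_assoc, ← Finset.sum_div]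
        simp only [Fin.val_mk] at h  -- no-op safeguard
        rw [show (∑ k, d^[i] (y k) * c k) = 0 from h, zero_div]
      -- the derivative of b kills the first m rows
      have hdrows : ∀ i : ℕ, i < m → ∑ k, d^[i] (y k) * d (b k) = 0 := by
        intro i hi
        have h0' : d (∑ k, d^[i] (y k) * b k) = 0 := by
          rw [hbrows i (lt_trans hi (Nat.lt_succ_self m))]
          exact isDeriv_zero hd
        rw [isDeriv_sum hd] at h0'
        have hsplit : ∀ k, d (d^[i] (y k) * b k) =
            d^[i+1] (y k) * b k + d^[i] (y k) * d (b k) := by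
          intro k
          rw [hd.2, Function.iterate_succ_apply']
        rw [Finset.sum_congr rfl (fun k _ => hsplit k), Finset.sum_add_distrib,
          hbrows (i+1) (Nat.succ_lt_succ hi), zero_add] at h0'
        exact h0'
      by_cases hdb : ∀ k, d (b k) = 0
      · refine ⟨b, ?_, hdb, ?_⟩
        · intro h
          exact one_ne_zero (hb0 ▸ congrFun h 0 : (1 : F) = 0)
        · have := hbrows 0 (Nat.succ_pos m)
          simpa [mul_comm] using this
      · push_neg at hdb
        have hdb0 : d (b 0) = 0 := by rw [hb0]; exact isDeriv_one hd
        set a : Fin (m+1) → F := fun k => d (b k) with ha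
        have hrows' : ∀ i : Fin m,
            ∑ k, d^[(i : ℕ)] (y ((0 : Fin (m+1)).succAbove k)) * a ((0 : Fin (m+1)).succAbove k) = 0 := by
          intro i
          have h := hdrows (i : ℕ) i.isLt
          rw [Fin.sum_univ_succAbove (fun x => d^[(i : ℕ)] (y x) * a x) 0] at h
          simpa [ha, hdb0] using h
        have ha' : (fun k => a ((0 : Fin (m+1)).succAbove k)) ≠ 0 := by
          obtain ⟨k, hk⟩ := hdb
          have hkj : k ≠ 0 := fun h => hk (h ▸ hdb0)
          obtain ⟨k', hk'⟩ := Fin.exists_succAbove_eq hkj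
          intro h
          exact hk (by rw [← hk']; exact congrFun h k')
        obtain ⟨c₀, h0, hcst, hsum⟩ := IH (fun k => y ((0 : Fin (m+1)).succAbove k)) _ ha' hrows'
        exact extend_lemma hd y 0 c₀ h0 hcst hsum

end Aux

/-- Frobenius' theorem: `y₁,…,y_r` are linearly dependent over the constants of a
differential field iff the columns of their Wronski matrix are linearly dependent over `F`. -/
theorem frobenius_wronskian {F : Type*} [Field F] (d : F → F) (hd : IsDeriv d)
    {r : ℕ} (y : Fin r → F) :
    (∃ c : Fin r → F, c ≠ 0 ∧ (∀ i, d (c i) = 0) ∧ ∑ i, c i * y i = 0) ↔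
    (∃ c : Fin r → F, c ≠ 0 ∧
      (Matrix.of fun i j : Fin r => d^[(i : ℕ)] (y j)).mulVec c = 0) := by
  constructor
  · rintro ⟨c, hc, hconst, hsum⟩
    refine ⟨c, hc, ?_⟩
    funext i
    have key : ∀ n : ℕ, ∑ j, d^[n] (y j) * c j = d^[n] (∑ j, c j * y j) := by
      intro n
      induction n with
      | zero => simp [mul_comm]
      | succ n ih =>
        rw [Function.iterate_succ_apply', ← ih, isDeriv_sum hd]
        refine Finset.sum_congr rfl fun j _ => ?_
        rw [hd.2, Function.iterate_succ_apply', hconst j, mul_zero, add_zero]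
    simp only [Matrix.mulVec, dotProduct, Matrix.of_apply, Pi.zero_apply]
    rw [key (i : ℕ), hsum]
    exact isDeriv_iterate_zero hd _
  · rintro ⟨c, hc, hmul⟩
    refine wronskian_bwd hd r y c hc fun i => ?_
    have := congrFun hmul i
    simpa [Matrix.mulVec, dotProduct] using this
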